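/- arXiv:1606.06917 — 2 statements merged into one kernel-verified Lean document; each statement's English description precedes it below -/
import Mathlib

section
/- Let L ≥ 1, η, ξ₊, ξ₋ ∈ ℂ, and let x_1,…,x_L, z_1,…,z_L ∈ ℂ be nonzero with x_1²,…,x_L² pairwise distinct, z_1²,…,z_L² pairwise distinct, and (z_i ± η/2)² ≠ x_k² and (x_i ± η/2)² ≠ z_k² for all i,k. Then A_{{z}}[f_{ξ₊,ξ₋,{x}}] = (−1)^L · A_{{x}}[f_{−ξ₊+η/2, −ξ₋+η/2, {z}}]. -/
open Finset

/-- `A_{{u}}[f]` as a ratio of determinants. -/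
noncomputable def Afun {L : ℕ} (η : ℂ) (u : Fin L → ℂ) (f : ℂ → ℂ) : ℂ :=
  Matrix.det (Matrix.of fun i j : Fin L =>
      f (u i) * (u i + η / 2) ^ (2 * (j : ℕ)) + f (-u i) * (u i - η / 2) ^ (2 * (j : ℕ)))
    / Matrix.det (Matrix.of fun i j : Fin L => u i ^ (2 * (j : ℕ)))

/-- `f_{ξ₊,ξ₋,{v}}(λ) = ((λ+ξ₊)(λ+ξ₋)/λ) ∏_m (λ²−v_m²)/((λ+η/2)²−v_m²)`. -/
noncomputable def fFun (η ξp ξm : ℂ) {M : ℕ} (v : Fin M → ℂ) (lam : ℂ) : ℂ :=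
  ((lam + ξp) * (lam + ξm) / lam) *
    ∏ m, ((lam ^ 2 - v m ^ 2) / ((lam + η / 2) ^ 2 - v m ^ 2))

noncomputable def Efun (η ξp ξm Z X : ℂ) : ℂ :=
  2*(ξp+ξm-η)*Z + (ξp+ξm)*η^2/2 - 2*η*ξp*ξm - 2*(ξp+ξm)*X

/-- Partial fraction / Lagrange interpolation identity. -/
lemma lemB {L : ℕ} (k : ℕ) (hk : k < L) (v : Fin L → ℂ)
    (hv : ∀ i j, i ≠ j → v i ≠ v j) (t : ℂ) (ht : ∀ j, t ≠ v j) :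
    ∑ j, v j ^ k / ((t - v j) * ∏ m ∈ univ.erase j, (v j - v m))
      = t ^ k / ∏ m, (t - v m) := by
  have hinj : Set.InjOn v (univ : Finset (Fin L)) := by
    intro a _ b _ hab
    by_contra h
    exact hv a b h hab
  have hdeg : (Polynomial.X ^ k : Polynomial ℂ).degree
      < ((univ : Finset (Fin L)).card : ℕ) := by
    rw [Polynomial.degree_X_pow, Finset.card_univ, Fintype.card_fin]
    exact_mod_cast hk
  have key := congrArg (Polynomial.eval t) (Lagrange.eq_interpolate hinj hdeg)
  rw [Lagrange.interpolate_apply] at key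
  simp only [Polynomial.eval_finset_sum, Polynomial.eval_mul, Polynomial.eval_C,
    Polynomial.eval_pow, Polynomial.eval_X, Lagrange.basis, Polynomial.eval_prod,
    Lagrange.basisDivisor, Polynomial.eval_sub] at key
  -- key : ∑ i, v i ^ k * ∏ j ∈ erase i, ((v i - v j)⁻¹ * (t - v j)) = t ^ k
  rw [key, Finset.sum_div]
  refine Finset.sum_congr rfl fun j _ => ?_
  have htj : t - v j ≠ 0 := sub_ne_zero.mpr (ht j)
  have hQ : (∏ m ∈ univ.erase j, (t - v m)) ≠ 0 :=
    Finset.prod_ne_zero_iff.mpr fun m _ => sub_ne_zero.mpr (ht m)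
  have hPj : (∏ m ∈ univ.erase j, (v j - v m)) ≠ 0 :=
    Finset.prod_ne_zero_iff.mpr fun m hm =>
      sub_ne_zero.mpr (hv j m (Ne.symm (Finset.mem_erase.mp hm).1))
  have hsplit : (∏ m, (t - v m)) = (t - v j) * ∏ m ∈ univ.erase j, (t - v m) :=
    (Finset.mul_prod_erase univ _ (mem_univ j)).symm
  rw [hsplit, Finset.prod_mul_distrib, Finset.prod_inv_distrib]
  field_simp

/-- Main matrix factorization. -/
lemma lemMain {L : ℕ} (η ξp ξm : ℂ) (u w : Fin L → ℂ)
    (hu0 : ∀ i, u i ≠ 0)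
    (hw : ∀ i j, i ≠ j → w i ^ 2 ≠ w j ^ 2)
    (huw : ∀ i k, (u i + η / 2) ^ 2 ≠ w k ^ 2 ∧ (u i - η / 2) ^ 2 ≠ w k ^ 2) :
    (Matrix.of fun i k : Fin L =>
        fFun η ξp ξm w (u i) * (u i + η / 2) ^ (2 * (k : ℕ))
          + fFun η ξp ξm w (-u i) * (u i - η / 2) ^ (2 * (k : ℕ)))
      = (Matrix.of fun i j : Fin L => (∏ m, (u i ^ 2 - w m ^ 2)) *
            (Efun η ξp ξm (u i ^ 2) (w j ^ 2)
              / (((u i + η / 2) ^ 2 - w j ^ 2) * ((u i - η / 2) ^ 2 - w j ^ 2))))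
        * (Matrix.of fun j k : Fin L =>
            (w j ^ 2) ^ (k : ℕ) / ∏ m ∈ univ.erase j, (w j ^ 2 - w m ^ 2)) := by
  ext i k
  rw [Matrix.mul_apply]
  simp only [Matrix.of_apply]
  set A := (u i + η / 2) ^ 2 with hA
  set B := (u i - η / 2) ^ 2 with hB
  set P := ∏ m, (u i ^ 2 - w m ^ 2) with hP
  set Cu := ((u i + ξp) * (u i + ξm) / u i) * P with hCu
  set Du := -(((ξp - u i) * (ξm - u i)) / u i) * P with hDu
  have hAj : ∀ j, A - w j ^ 2 ≠ 0 := fun j => sub_ne_zero.mpr (huw i j).1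
  have hBj : ∀ j, B - w j ^ 2 ≠ 0 := fun j => sub_ne_zero.mpr (huw i j).2
  have hPA : (∏ m, (A - w m ^ 2)) ≠ 0 := Finset.prod_ne_zero_iff.mpr fun m _ => hAj m
  have hPB : (∏ m, (B - w m ^ 2)) ≠ 0 := Finset.prod_ne_zero_iff.mpr fun m _ => hBj m
  clear_value A B P Cu Du
  -- step 1: merge into partial fractions
  have step1 : ∀ j, P * (Efun η ξp ξm (u i ^ 2) (w j ^ 2)
        / ((A - w j ^ 2) * (B - w j ^ 2)))
      = Cu / (A - w j ^ 2) + Du / (B - w j ^ 2) := by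
    intro j
    rw [hCu, hDu, hA, hB]
    have h1 : (u i + η / 2) ^ 2 - w j ^ 2 ≠ 0 := sub_ne_zero.mpr (huw i j).1
    have h2 : (u i - η / 2) ^ 2 - w j ^ 2 ≠ 0 := sub_ne_zero.mpr (huw i j).2
    have h3 := hu0 i
    unfold Efun
    rw [div_add_div _ _ h1 h2, mul_div_assoc']
    congr 1
    field_simp
    ring
  -- rewrite summand
  have step2 : ∀ j : Fin L, P * (Efun η ξp ξm (u i ^ 2) (w j ^ 2)
          / ((A - w j ^ 2) * (B - w j ^ 2)))
        * ((w j ^ 2) ^ (k : ℕ) / ∏ m ∈ univ.erase j, (w j ^ 2 - w m ^ 2))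
      = Cu * ((w j ^ 2) ^ (k : ℕ) / ((A - w j ^ 2) * ∏ m ∈ univ.erase j, (w j ^ 2 - w m ^ 2)))
        + Du * ((w j ^ 2) ^ (k : ℕ) / ((B - w j ^ 2) * ∏ m ∈ univ.erase j, (w j ^ 2 - w m ^ 2))) := by
    intro j
    rw [step1 j]
    have hPj : (∏ m ∈ univ.erase j, (w j ^ 2 - w m ^ 2)) ≠ 0 :=
      Finset.prod_ne_zero_iff.mpr fun m hm =>
        sub_ne_zero.mpr (hw j m (Ne.symm (Finset.mem_erase.mp hm).1))
    rw [add_mul, div_mul_div_comm, div_mul_div_comm, ← mul_div_assoc, ← mul_div_assoc]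
  rw [Finset.sum_congr rfl fun j _ => step2 j, Finset.sum_add_distrib,
    ← Finset.mul_sum, ← Finset.mul_sum]
  have hw2 : ∀ a b : Fin L, a ≠ b → (fun m => w m ^ 2) a ≠ (fun m => w m ^ 2) b := hw
  have htA : ∀ j, A ≠ (fun m => w m ^ 2) j := fun j => fun h => hAj j (sub_eq_zero.mpr h)
  have htB : ∀ j, B ≠ (fun m => w m ^ 2) j := fun j => fun h => hBj j (sub_eq_zero.mpr h)
  rw [lemB (k : ℕ) k.isLt (fun m => w m ^ 2) hw2 A htA,
     lemB (k : ℕ) k.isLt (fun m => w m ^ 2) hw2 B htB]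
  have e1 : fFun η ξp ξm w (u i) = Cu / ∏ m, (A - w m ^ 2) := by
    rw [hCu, hA, hP]
    simp only [fFun]
    rw [Finset.prod_div_distrib]
    ring
  have e2 : fFun η ξp ξm w (-u i) = Du / ∏ m, (B - w m ^ 2) := by
    rw [hDu, hB, hP]
    simp only [fFun]
    rw [Finset.prod_congr rfl (fun m _ =>
      show ((-u i) ^ 2 - w m ^ 2) / ((-u i + η / 2) ^ 2 - w m ^ 2)
          = (u i ^ 2 - w m ^ 2) / ((u i - η / 2) ^ 2 - w m ^ 2) from by
        congr 1
        · rw [neg_sq]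
        · congr 1
          ring)]
    rw [Finset.prod_div_distrib]
    field_simp
    ring
  have e3 : (u i + η / 2) ^ (2 * (k : ℕ)) = A ^ (k : ℕ) := by rw [hA, ← pow_mul]
  have e4 : (u i - η / 2) ^ (2 * (k : ℕ)) = B ^ (k : ℕ) := by rw [hB, ← pow_mul]
  rw [e1, e2, e3, e4]
  ring

lemma prodErase {L : ℕ} (v : Fin L → ℂ) :
    ∏ j, ∏ m ∈ univ.erase j, (v j - v m)
      = (∏ j : Fin L, (-1 : ℂ) ^ (Ioi j).card)
        * (∏ i, ∏ j ∈ Ioi i, (v j - v i)) ^ 2 := by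
  have hsplit : ∀ j : Fin L, (univ.erase j) = Iio j ∪ Ioi j := by
    intro j
    ext m
    simp only [mem_erase, mem_union, mem_Iio, mem_Ioi, mem_univ, and_true]
    exact ne_iff_lt_or_gt
  have hdisj : ∀ j : Fin L, Disjoint (Iio j) (Ioi j) := by
    intro j
    refine Finset.disjoint_left.mpr fun m hm hm' => ?_
    exact absurd (mem_Ioi.mp hm') (not_lt_of_gt (mem_Iio.mp hm))
  calc ∏ j, ∏ m ∈ univ.erase j, (v j - v m)
      = ∏ j, ((∏ m ∈ Iio j, (v j - v m)) * ∏ m ∈ Ioi j, (v j - v m)) := by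
        refine Finset.prod_congr rfl fun j _ => ?_
        rw [hsplit j, Finset.prod_union (hdisj j)]
    _ = (∏ j, ∏ m ∈ Iio j, (v j - v m)) * ∏ j, ∏ m ∈ Ioi j, (v j - v m) := by
        rw [Finset.prod_mul_distrib]
    _ = (∏ i, ∏ j ∈ Ioi i, (v j - v i)) *
          ∏ j, ((-1 : ℂ) ^ (Ioi j).card * ∏ m ∈ Ioi j, (v m - v j)) := by
        congr 1
        · exact Finset.prod_comm' (fun j m => by
            simp only [mem_univ, true_and, and_true, mem_Iio, mem_Ioi])
        · refine Finset.prod_congr rfl fun j _ => ?_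
          rw [← Finset.prod_const, ← Finset.prod_mul_distrib]
          exact Finset.prod_congr rfl fun m _ => by ring
    _ = (∏ j : Fin L, (-1 : ℂ) ^ (Ioi j).card)
        * (∏ i, ∏ j ∈ Ioi i, (v j - v i)) ^ 2 := by
        rw [Finset.prod_mul_distrib]
        ring

theorem stmt11 (L : ℕ) (hL : 1 ≤ L) (η ξp ξm : ℂ)
    (x z : Fin L → ℂ)
    (hx0 : ∀ i, x i ≠ 0) (hz0 : ∀ i, z i ≠ 0)
    (hx : ∀ i j, i ≠ j → x i ^ 2 ≠ x j ^ 2)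
    (hz : ∀ i j, i ≠ j → z i ^ 2 ≠ z j ^ 2)
    (hzx : ∀ i k, (z i + η / 2) ^ 2 ≠ x k ^ 2 ∧ (z i - η / 2) ^ 2 ≠ x k ^ 2)
    (hxz : ∀ i k, (x i + η / 2) ^ 2 ≠ z k ^ 2 ∧ (x i - η / 2) ^ 2 ≠ z k ^ 2) :
    Afun η z (fFun η ξp ξm x)
      = (-1 : ℂ) ^ L * Afun η x (fFun η (-ξp + η / 2) (-ξm + η / 2) z) := by
  -- notation
  set Vz : ℂ := ∏ i, ∏ j ∈ Ioi i, (z j ^ 2 - z i ^ 2) with hVz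
  set Vx : ℂ := ∏ i, ∏ j ∈ Ioi i, (x j ^ 2 - x i ^ 2) with hVx
  set G : Matrix (Fin L) (Fin L) ℂ := Matrix.of fun i j =>
    Efun η ξp ξm (z i ^ 2) (x j ^ 2)
      / (((z i + η / 2) ^ 2 - x j ^ 2) * ((z i - η / 2) ^ 2 - x j ^ 2)) with hG
  set c : ℂ := ∏ j : Fin L, (-1 : ℂ) ^ (Ioi j).card with hc
  -- denominators are Vandermonde determinants
  have hvdm : ∀ u : Fin L → ℂ,
      Matrix.det (Matrix.of fun i j : Fin L => u i ^ (2 * (j : ℕ)))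
        = ∏ i, ∏ j ∈ Ioi i, (u j ^ 2 - u i ^ 2) := by
    intro u
    have : (Matrix.of fun i j : Fin L => u i ^ (2 * (j : ℕ)))
        = Matrix.vandermonde (fun i => u i ^ 2) := by
      ext i j
      simp only [Matrix.of_apply, Matrix.vandermonde]
      rw [pow_mul]
    rw [this, Matrix.det_vandermonde]
  -- z-side numerator
  have hnum_z : Matrix.det (Matrix.of fun i j : Fin L =>
        fFun η ξp ξm x (z i) * (z i + η / 2) ^ (2 * (j : ℕ))
          + fFun η ξp ξm x (-z i) * (z i - η / 2) ^ (2 * (j : ℕ)))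
      = (∏ i, ∏ m, (z i ^ 2 - x m ^ 2)) * Matrix.det G
          * (((∏ j, ∏ m ∈ univ.erase j, (x j ^ 2 - x m ^ 2)))⁻¹ * Vx) := by
    rw [lemMain η ξp ξm z x hz0 hx hzx, Matrix.det_mul]
    congr 1
    · exact Matrix.det_mul_column (fun i => ∏ m, (z i ^ 2 - x m ^ 2)) G
    · have : (Matrix.of fun j k : Fin L =>
            (x j ^ 2) ^ (k : ℕ) / ∏ m ∈ univ.erase j, (x j ^ 2 - x m ^ 2))
          = Matrix.of fun j k : Fin L =>
            (∏ m ∈ univ.erase j, (x j ^ 2 - x m ^ 2))⁻¹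
              * Matrix.vandermonde (fun i => x i ^ 2) j k := by
        ext j k
        simp only [Matrix.of_apply, Matrix.vandermonde]
        rw [div_eq_mul_inv, mul_comm]
      rw [this, Matrix.det_mul_column, Matrix.det_vandermonde, Finset.prod_inv_distrib]
  -- x-side numerator
  have hnum_x : Matrix.det (Matrix.of fun i j : Fin L =>
        fFun η (-ξp + η / 2) (-ξm + η / 2) z (x i) * (x i + η / 2) ^ (2 * (j : ℕ))
          + fFun η (-ξp + η / 2) (-ξm + η / 2) z (-x i) * (x i - η / 2) ^ (2 * (j : ℕ)))
      = (∏ k, ∏ m, (x k ^ 2 - z m ^ 2)) * Matrix.det G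
          * (((∏ j, ∏ m ∈ univ.erase j, (z j ^ 2 - z m ^ 2)))⁻¹ * Vz) := by
    rw [lemMain η (-ξp + η / 2) (-ξm + η / 2) x z hx0 hz hxz, Matrix.det_mul]
    congr 1
    · have hGt : (Matrix.of fun k j : Fin L => (∏ m, (x k ^ 2 - z m ^ 2)) *
            (Efun η (-ξp + η / 2) (-ξm + η / 2) (x k ^ 2) (z j ^ 2)
              / (((x k + η / 2) ^ 2 - z j ^ 2) * ((x k - η / 2) ^ 2 - z j ^ 2))))
          = Matrix.of fun k j : Fin L =>
              (∏ m, (x k ^ 2 - z m ^ 2)) * G.transpose k j := by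
        ext k j
        simp only [Matrix.of_apply, Matrix.transpose_apply, hG]
        congr 1
        congr 1
        · simp only [Efun]; ring
        · ring
      rw [hGt, Matrix.det_mul_column, Matrix.det_transpose]
    · have : (Matrix.of fun j k : Fin L =>
            (z j ^ 2) ^ (k : ℕ) / ∏ m ∈ univ.erase j, (z j ^ 2 - z m ^ 2))
          = Matrix.of fun j k : Fin L =>
            (∏ m ∈ univ.erase j, (z j ^ 2 - z m ^ 2))⁻¹
              * Matrix.vandermonde (fun i => z i ^ 2) j k := by
        ext j k
        simp only [Matrix.of_apply, Matrix.vandermonde]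
        rw [div_eq_mul_inv, mul_comm]
      rw [this, Matrix.det_mul_column, Matrix.det_vandermonde, Finset.prod_inv_distrib]
  rw [Afun, Afun, hvdm z, hvdm x, hnum_z, hnum_x]
  -- nonzero facts
  have hVz0 : Vz ≠ 0 := by
    rw [hVz]
    refine Finset.prod_ne_zero_iff.mpr fun i _ => Finset.prod_ne_zero_iff.mpr fun j hj => ?_
    exact sub_ne_zero.mpr (hz j i (ne_of_gt (mem_Ioi.mp hj)))
  have hVx0 : Vx ≠ 0 := by
    rw [hVx]
    refine Finset.prod_ne_zero_iff.mpr fun i _ => Finset.prod_ne_zero_iff.mpr fun j hj => ?_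
    exact sub_ne_zero.mpr (hx j i (ne_of_gt (mem_Ioi.mp hj)))
  have hc0 : c ≠ 0 := by
    rw [hc]
    exact Finset.prod_ne_zero_iff.mpr fun j _ => pow_ne_zero _ (by norm_num)
  -- product sign flip
  have hPx : (∏ k, ∏ m, (x k ^ 2 - z m ^ 2))
      = (-1 : ℂ) ^ L * ∏ i, ∏ m, (z i ^ 2 - x m ^ 2) := by
    have h1 : ∀ k : Fin L, (∏ m, (x k ^ 2 - z m ^ 2))
        = (-1 : ℂ) ^ L * ∏ m, (z m ^ 2 - x k ^ 2) := by
      intro k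
      calc (∏ m, (x k ^ 2 - z m ^ 2)) = ∏ m, (-1 : ℂ) * (z m ^ 2 - x k ^ 2) :=
            Finset.prod_congr rfl fun m _ => by ring
        _ = (-1 : ℂ) ^ L * ∏ m, (z m ^ 2 - x k ^ 2) := by
            rw [Finset.prod_mul_distrib, Finset.prod_const, Finset.card_univ,
              Fintype.card_fin]
    rw [Finset.prod_congr rfl fun k _ => h1 k, Finset.prod_mul_distrib,
      Finset.prod_const, Finset.card_univ, Fintype.card_fin, ← pow_mul,
      Finset.prod_comm]
    congr 1
    rcases Nat.even_or_odd L with h | h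
    · rw [(h.mul_left L).neg_one_pow, h.neg_one_pow]
    · rw [(h.mul h).neg_one_pow, h.neg_one_pow]
  have hDx : (∏ j, ∏ m ∈ univ.erase j, (x j ^ 2 - x m ^ 2)) = c * Vx ^ 2 :=
    prodErase (fun j => x j ^ 2)
  have hDz : (∏ j, ∏ m ∈ univ.erase j, (z j ^ 2 - z m ^ 2)) = c * Vz ^ 2 :=
    prodErase (fun j => z j ^ 2)
  rw [hPx, hDx, hDz]
  have he : (-1 : ℂ) ^ L * (-1 : ℂ) ^ L = 1 := by
    rw [← pow_add, ← two_mul, pow_mul]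
    norm_num
  field_simp
  rw [← hVx, ← hVz]
  have hzi : Vz * Vz⁻¹ = 1 := mul_inv_cancel₀ hVz0
  have hxi : Vx * Vx⁻¹ = 1 := mul_inv_cancel₀ hVx0
  linear_combination (-((∏ i, ∏ m, (z i ^ 2 - x m ^ 2)) * Matrix.det G * c * Vx ^ 2 * Vz ^ 2)
    + (∏ i, ∏ m, (z i ^ 2 - x m ^ 2)) * Matrix.det G * Vz ^ 2 * c * Vx ^ 2
    - (∏ i, ∏ m, (z i ^ 2 - x m ^ 2)) * Matrix.det G) * he
    + ((∏ i, ∏ m, (z i ^ 2 - x m ^ 2)) * Matrix.det G) * hzi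
    - ((∏ i, ∏ m, (z i ^ 2 - x m ^ 2)) * Matrix.det G * ((-1 : ℂ) ^ L * (-1 : ℂ) ^ L)) * hxi
end

section
/- Let M, S ≥ 0 be integers with M+S ≥ 1, let η ∈ ℂ, and let x_1,…,x_M, w_1,…,w_S ∈ ℂ. Set X^{(±)}(λ) := ∏_{ℓ=1}^M [λ² − (x_ℓ ± η/2)²], X_k^{(±)}(λ) := X^{(±)}(λ)/(λ² − (x_k ± η/2)²), and W_k(λ) := ∏_{ℓ≠k}(λ²−w_ℓ²). Let C̃ be the (2M+S)×(2M+S) matrix of coefficients defined by the expansions in powers λ^{2(j−1)}, j = 1,…,2M+S: X^{(+)}(λ) X_k^{(−)}(λ) = ∑_j C̃_{j,k} λ^{2(j−1)} for 1 ≤ k ≤ M; X_k^{(+)}(λ) X^{(−)}(λ) = ∑_j C̃_{j,M+k} λ^{2(j−1)} for 1 ≤ k ≤ M; X^{(+)}(λ) X^{(−)}(λ) W_k(λ) = ∑_j C̃_{j,2M+k} λ^{2(j−1)} for 1 ≤ k ≤ S. Then det C̃ = ∏_{1≤a<b≤S}(w_a² − w_b²) · V̂(x_M+η/2, …, x_1+η/2,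 x_M−η/2, …, x_1−η/2). -/
open Finset

open Polynomial

lemma coeff_of_eval {K : ℕ} (P : ℂ[X]) (v : Fin K → ℂ)
    (h : ∀ t : ℂ, P.eval t = ∑ j, v j * t ^ (j:ℕ)) (j : Fin K) : v j = P.coeff j := by
  have hPQ : P = ∑ j : Fin K, C (v j) * X ^ (j:ℕ) := by
    apply Polynomial.funext
    intro t
    rw [h t]
    simp [eval_finset_sum]
  rw [hPQ, finset_sum_coeff]
  simp only [coeff_C_mul, coeff_X_pow]
  rw [Finset.sum_eq_single j]
  · simp
  · intro b _ hb
    have : (j:ℕ) ≠ (b:ℕ) := fun hh => hb (Fin.ext hh.symm)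
    simp [this]
  · simp

lemma prod_Ioi_castSucc' {Mo : Type*} [CommMonoid Mo] {n : ℕ} (j : Fin n) (g : Fin (n+1) → Mo) :
    ∏ k ∈ Ioi j.castSucc, g k = g (Fin.last n) * ∏ k ∈ Ioi j, g k.castSucc := by
  have hset : Ioi j.castSucc = insert (Fin.last n) ((Ioi j).map Fin.castSuccEmb) := by
    ext k
    simp only [mem_Ioi, mem_insert, mem_map, Fin.castSuccEmb, Function.Embedding.coeFn_mk]
    constructor
    · intro hk
      rcases eq_or_ne k (Fin.last n) with h | h
      · exact Or.inl h
      · refine Or.inr ⟨k.castPred h, ?_, ?_⟩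
        · simpa [Fin.lt_def] using hk
        · exact Fin.ext (by simp)
    · rintro (rfl | ⟨k', hk', rfl⟩)
      · exact Fin.castSucc_lt_last j
      · rw [Fin.lt_def]
        simp only [Fin.coe_castSucc, Fin.coe_castLE]
        exact hk'
  rw [hset, Finset.prod_insert, Finset.prod_map]
  · rfl
  · simp only [mem_map, Fin.castSuccEmb, Function.Embedding.coeFn_mk]
    rintro ⟨k', _, hk'⟩
    exact absurd hk' (Fin.castSucc_lt_last k').ne

lemma pairprod_split {n : ℕ} (f : Fin (n+1) → Fin (n+1) → ℂ) :
    ∏ j, ∏ k ∈ Ioi j, f j k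
      = (∏ j : Fin n, f j.castSucc (Fin.last n)) *
        ∏ j : Fin n, ∏ k ∈ Ioi j, f j.castSucc k.castSucc := by
  rw [Fin.prod_univ_castSucc]
  have : (Ioi (Fin.last n)) = (∅ : Finset (Fin (n+1))) := by
    ext k; simp [Fin.le_last k, not_lt]
  rw [this]
  simp only [Finset.prod_empty, mul_one]
  rw [← Finset.prod_mul_distrib]
  congr 1
  ext j
  rw [prod_Ioi_castSucc' j]

lemma pairprod_rev {n : ℕ} (f : Fin n → Fin n → ℂ) :
    ∏ j, ∏ k ∈ Ioi j, f (Fin.rev j) (Fin.rev k) = ∏ j, ∏ k ∈ Ioi j, f k j := by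
  rw [Finset.prod_sigma' (univ : Finset (Fin n)) (fun j => Ioi j) (fun j k => f j.rev k.rev),
      Finset.prod_sigma' (univ : Finset (Fin n)) (fun j => Ioi j) (fun j k => f k j)]
  refine Finset.prod_nbij' (fun x => ⟨x.2.rev, x.1.rev⟩) (fun x => ⟨x.2.rev, x.1.rev⟩) ?_ ?_ ?_ ?_ ?_
  · rintro ⟨j, k⟩ hx
    simp only [mem_sigma, mem_univ, mem_Ioi, true_and] at hx ⊢
    exact Fin.rev_lt_rev.mpr hx
  · rintro ⟨j, k⟩ hx
    simp only [mem_sigma, mem_univ, mem_Ioi, true_and] at hx ⊢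
    exact Fin.rev_lt_rev.mpr hx
  · rintro ⟨j, k⟩ _; simp
  · rintro ⟨j, k⟩ _; simp
  · rintro ⟨j, k⟩ _; simp

lemma detShift {n d : ℕ} (Q : ℂ[X]) (hQ : Q.Monic) (hd : Q.natDegree = d)
    (g : Fin n → ℂ[X]) (hg : ∀ k, (g k).natDegree < n) :
    (Matrix.of fun j k : Fin n => (Q * g k).coeff (d + (j:ℕ))).det
      = (Matrix.of fun j k : Fin n => (g k).coeff (j:ℕ)).det := by
  set T : Matrix (Fin n) (Fin n) ℂ :=
    Matrix.of fun j i : Fin n =>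
      if (j:ℕ) ≤ (i:ℕ) ∧ (i:ℕ) ≤ d + (j:ℕ) then Q.coeff (d + (j:ℕ) - (i:ℕ)) else 0 with hT
  have hmul : (Matrix.of fun j k : Fin n => (Q * g k).coeff (d + (j:ℕ)))
      = T * (Matrix.of fun j k : Fin n => (g k).coeff (j:ℕ)) := by
    ext j k
    simp only [Matrix.mul_apply, Matrix.of_apply, hT]
    rw [mul_comm, coeff_mul, Finset.Nat.sum_antidiagonal_eq_sum_range_succ_mk]
    set G : ℕ → ℂ := fun i =>
      (if (j:ℕ) ≤ i ∧ i ≤ d + (j:ℕ) then Q.coeff (d + (j:ℕ) - i) else 0) * (g k).coeff i with hG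
    have h1 : ∀ i ∈ Finset.range (d + (j:ℕ) + 1),
        (g k).coeff i * Q.coeff (d + (j:ℕ) - i) = G i := by
      intro i hi
      rw [Finset.mem_range, Nat.lt_succ_iff] at hi
      by_cases hji : (j:ℕ) ≤ i
      · simp [hG, hji, hi, mul_comm]
      · have : Q.natDegree < d + (j:ℕ) - i := by omega
        simp [hG, hji, Polynomial.coeff_eq_zero_of_natDegree_lt this]
    rw [Finset.sum_congr rfl h1]
    have h2 : ∀ i : Fin n,
        (if (j:ℕ) ≤ (i:ℕ) ∧ (i:ℕ) ≤ d + (j:ℕ) then Q.coeff (d + (j:ℕ) - (i:ℕ)) else 0) *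
          (g k).coeff (i:ℕ) = G (i:ℕ) := fun i => rfl
    rw [Finset.sum_congr rfl (fun i _ => h2 i), Fin.sum_univ_eq_sum_range G n]
    have hzero : ∀ i : ℕ, i ∉ Finset.range (min n (d + (j:ℕ) + 1)) → i ∈ Finset.range (n + (d + (j:ℕ) + 1)) → G i = 0 := by
      intro i hi _
      rw [Finset.mem_range, lt_min_iff, not_and_or] at hi
      rcases hi with hi | hi
      · push_neg at hi
        simp [hG, Polynomial.coeff_eq_zero_of_natDegree_lt (lt_of_lt_of_le (hg k) hi)]
      · push_neg at hi
        have : ¬ (i ≤ d + (j:ℕ)) := by omega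
        simp [hG, this]
    have e1 : (Finset.range (d + (j:ℕ) + 1)).sum G = (Finset.range (n + (d + (j:ℕ) + 1))).sum G :=
      Finset.sum_subset (Finset.range_subset_range.mpr (by omega)) (fun i hi hni => hzero i (by simp at hni ⊢; omega) hi)
    have e2 : (Finset.range n).sum G = (Finset.range (n + (d + (j:ℕ) + 1))).sum G :=
      Finset.sum_subset (Finset.range_subset_range.mpr (by omega)) (fun i hi hni => hzero i (by simp at hni ⊢; omega) hi)
    rw [e1, e2]
  rw [hmul, Matrix.det_mul]
  have hTdet : T.det = 1 := by
    rw [Matrix.det_of_upperTriangular]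
    · apply Finset.prod_eq_one
      intro i _
      simp only [hT, Matrix.of_apply, le_refl, Nat.le_add_left, and_self, if_pos,
        Nat.add_sub_cancel]
      rw [← hd]
      exact hQ.coeff_natDegree
    · intro i j hij
      simp only [id_eq] at hij
      simp only [hT, Matrix.of_apply, ite_eq_right_iff, and_imp]
      intro h1 _
      exact absurd h1 (not_le.mpr (Fin.lt_def.mp hij))
  rw [hTdet, one_mul]

lemma lagDet (n : ℕ) (r : Fin n → ℂ) :
    (Matrix.of fun j k : Fin n => (∏ l ∈ univ.erase k, (X - C (r l))).coeff (j:ℕ)).det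
      = ∏ j, ∏ k ∈ Ioi j, (r j - r k) := by
  induction n with
  | zero => simp [Matrix.det_isEmpty]
  | succ n ih =>
    set p : Fin (n+1) → ℂ[X] := fun k => ∏ l ∈ univ.erase k, (X - C (r l)) with hp
    set q : Fin (n+1) → ℂ[X] :=
      fun k => ∏ l ∈ (univ.erase (Fin.last n)).erase k, (X - C (r l)) with hq
    set L : Matrix (Fin (n+1)) (Fin (n+1)) ℂ := Matrix.of fun j k => (p k).coeff (j:ℕ) with hL
    set E : Matrix (Fin (n+1)) (Fin (n+1)) ℂ := Matrix.of fun m k =>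
      (if m = k then (1:ℂ) else 0) +
        (if m = Fin.last n ∧ k ≠ Fin.last n then (-1:ℂ) else 0) with hE
    have hEdet : E.det = 1 := by
      rw [Matrix.det_of_lowerTriangular E ?_]
      · apply Finset.prod_eq_one
        intro i _
        by_cases hi : i = Fin.last n <;> simp [hE, hi]
      · intro i j hij
        replace hij : i < j := hij
        have h1 : i ≠ j := ne_of_lt hij
        have h2 : i ≠ Fin.last n := by
          intro h
          exact absurd (h ▸ hij) (not_lt.mpr (Fin.le_last j))
        simp [hE, h1, h2]
    -- polynomial identities
    have hqdeg : ∀ k : Fin (n+1), k ≠ Fin.last n → (q k).natDegree ≤ n - 1 := by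
      intro k hk
      refine le_trans (Polynomial.natDegree_prod_le _ _) ?_
      have hcard : ((univ.erase (Fin.last n)).erase k).card = n - 1 := by
        rw [Finset.card_erase_of_mem, Finset.card_erase_of_mem] <;>
          simp [Finset.mem_erase, hk]
      calc ∑ l ∈ (univ.erase (Fin.last n)).erase k, (X - C (r l)).natDegree
          ≤ ∑ l ∈ (univ.erase (Fin.last n)).erase k, 1 := by
            apply Finset.sum_le_sum
            intro l _
            exact le_of_eq (natDegree_X_sub_C _)
        _ = n - 1 := by rw [Finset.sum_const, smul_eq_mul, mul_one, hcard]
    have hpk : ∀ k : Fin (n+1), k ≠ Fin.last n →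
        p k - p (Fin.last n) = C (r k - r (Fin.last n)) * q k := by
      intro k hk
      have h1 : p k = (X - C (r (Fin.last n))) * q k := by
        show (∏ l ∈ univ.erase k, (X - C (r l)))
            = (X - C (r (Fin.last n))) * ∏ l ∈ (univ.erase (Fin.last n)).erase k, (X - C (r l))
        rw [Finset.erase_right_comm]
        exact (Finset.mul_prod_erase _ _
          (Finset.mem_erase.mpr ⟨Ne.symm hk, Finset.mem_univ _⟩)).symm
      have h2 : p (Fin.last n) = (X - C (r k)) * q k := by
        show (∏ l ∈ univ.erase (Fin.last n), (X - C (r l)))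
            = (X - C (r k)) * ∏ l ∈ (univ.erase (Fin.last n)).erase k, (X - C (r l))
        exact (Finset.mul_prod_erase _ _
          (Finset.mem_erase.mpr ⟨hk, Finset.mem_univ _⟩)).symm
      rw [h1, h2, C_sub]
      ring
    -- the product N = L * E
    have hLE : ∀ j k : Fin (n+1), (L * E) j k =
        if k = Fin.last n then (p (Fin.last n)).coeff (j:ℕ)
        else (r k - r (Fin.last n)) * (q k).coeff (j:ℕ) := by
      intro j k
      rw [Matrix.mul_apply]
      simp only [hE, Matrix.of_apply, mul_add]
      rw [Finset.sum_add_distrib]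
      by_cases hk : k = Fin.last n
      · subst hk
        simp [Finset.sum_ite_eq' univ, hL]
      · have hsum1 : ∑ m, L j m * (if m = k then (1:ℂ) else 0) = L j k := by
          simp [Finset.sum_ite_eq' univ, mul_comm]
        have hsum2 : ∑ m, L j m * (if m = Fin.last n ∧ k ≠ Fin.last n then (-1:ℂ) else 0)
            = - L j (Fin.last n) := by
          simp only [hk, ne_eq, not_false_iff, and_true]
          simp [Finset.sum_ite_eq' univ, mul_comm]
        rw [hsum1, hsum2, if_neg hk]
        have : L j k - L j (Fin.last n) = (p k - p (Fin.last n)).coeff (j:ℕ) := by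
          simp [hL, Polynomial.coeff_sub]
        rw [sub_eq_add_neg] at this
        rw [this, hpk k hk, Polynomial.coeff_C_mul]
    set N2 : Matrix (Fin (n+1)) (Fin (n+1)) ℂ := Matrix.of fun j k =>
      if k = Fin.last n then (p (Fin.last n)).coeff (j:ℕ) else (q k).coeff (j:ℕ) with hN2
    set Dg : Matrix (Fin (n+1)) (Fin (n+1)) ℂ :=
      Matrix.diagonal (fun k => if k = Fin.last n then 1 else r k - r (Fin.last n)) with hDg
    have hfact : L * E = N2 * Dg := by
      ext j k
      rw [hLE j k, Matrix.mul_diagonal]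
      by_cases hk : k = Fin.last n <;> simp [hN2, hDg, hk, mul_comm]
    have hqn : ∀ k : Fin (n+1), k ≠ Fin.last n → (q k).coeff n = 0 := by
      intro k hk
      apply Polynomial.coeff_eq_zero_of_natDegree_lt
      have h1 := hqdeg k hk
      have h2 : (k:ℕ) < n := Fin.val_lt_last hk
      omega
    have hplast : (p (Fin.last n)).coeff n = 1 := by
      have hm : (p (Fin.last n)).Monic :=
        monic_prod_of_monic _ _ (fun l _ => monic_X_sub_C (r l))
      have hdeg : (p (Fin.last n)).natDegree = n := by
        show (∏ l ∈ univ.erase (Fin.last n), (X - C (r l))).natDegree = n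
        rw [natDegree_prod_of_monic _ _ (fun l _ => monic_X_sub_C (r l))]
        simp [natDegree_X_sub_C, Finset.card_erase_of_mem]
      have := hm.coeff_natDegree
      rwa [hdeg] at this
    have hfull : ∀ k : Fin n, (X - C (r k.castSucc)) * q k.castSucc
        = (X - C (r k.castSucc)) * ∏ l ∈ univ.erase k, (X - C (r l.castSucc)) := by
      intro k
      have hne : k.castSucc ≠ Fin.last n := (Fin.castSucc_lt_last k).ne
      have c1 : (X - C (r k.castSucc)) * q k.castSucc
          = ∏ l ∈ univ.erase (Fin.last n), (X - C (r l)) :=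
        Finset.mul_prod_erase _ (fun l => X - C (r l))
          (Finset.mem_erase.mpr ⟨hne, Finset.mem_univ _⟩)
      have c2 : (X - C (r (Fin.last n))) * ∏ l ∈ univ.erase (Fin.last n), (X - C (r l))
          = ∏ l : Fin (n+1), (X - C (r l)) :=
        Finset.mul_prod_erase _ (fun l => X - C (r l)) (Finset.mem_univ _)
      have c3 : (∏ l : Fin (n+1), (X - C (r l)))
          = (∏ l : Fin n, (X - C (r l.castSucc))) * (X - C (r (Fin.last n))) :=
        Fin.prod_univ_castSucc _
      have c4 : (X - C (r k.castSucc)) * ∏ l ∈ univ.erase k, (X - C (r l.castSucc))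
          = ∏ l : Fin n, (X - C (r l.castSucc)) :=
        Finset.mul_prod_erase _ (fun l : Fin n => X - C (r l.castSucc)) (Finset.mem_univ _)
      have hcancel : ∏ l ∈ univ.erase (Fin.last n), (X - C (r l))
          = ∏ l : Fin n, (X - C (r l.castSucc)) := by
        apply mul_left_cancel₀ (Polynomial.X_sub_C_ne_zero (r (Fin.last n)))
        rw [c2, c3, mul_comm]
      rw [c1, hcancel, c4]
    have hminor : ∀ k : Fin n, q k.castSucc = ∏ l ∈ univ.erase k, (X - C (r l.castSucc)) :=
      fun k => mul_left_cancel₀ (Polynomial.X_sub_C_ne_zero (r k.castSucc)) (hfull k)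
    have hN2det : N2.det = ∏ j : Fin n, ∏ k ∈ Ioi j, (r j.castSucc - r k.castSucc) := by
      rw [Matrix.det_succ_row N2 (Fin.last n)]
      rw [Finset.sum_eq_single (Fin.last n)]
      · have hsub : (N2.submatrix (Fin.last n).succAbove (Fin.last n).succAbove)
            = Matrix.of fun j k : Fin n =>
                (∏ l ∈ univ.erase k, (X - C (r l.castSucc))).coeff (j:ℕ) := by
          ext j k
          rw [Fin.succAbove_last]
          simp only [Matrix.submatrix_apply, hN2, Matrix.of_apply,
            if_neg (Fin.castSucc_lt_last k).ne, hminor k, Fin.coe_castSucc]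
        have hlastentry : N2 (Fin.last n) (Fin.last n) = 1 := by
          simp [hN2, hplast]
        rw [hsub, hlastentry, ih (fun l => r l.castSucc)]
        have : ((-1 : ℂ)) ^ (((Fin.last n) : ℕ) + ((Fin.last n) : ℕ)) = 1 :=
          Even.neg_one_pow ⟨(Fin.last n : ℕ), rfl⟩
        rw [this]
        ring
      · intro b _ hb
        have : N2 (Fin.last n) b = 0 := by
          simp only [hN2, Matrix.of_apply, if_neg hb, Fin.val_last]
          exact hqn b hb
        rw [this]
        ring
      · intro h
        exact absurd (Finset.mem_univ _) h
    have hLdet : L.det = (L * E).det := by rw [Matrix.det_mul, hEdet, mul_one]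
    show L.det = _
    rw [hLdet, hfact, Matrix.det_mul, hN2det, Matrix.det_diagonal,
        pairprod_split (f := fun j k => r j - r k)]
    rw [Fin.prod_univ_castSucc
      (f := fun k : Fin (n+1) => if k = Fin.last n then (1:ℂ) else r k - r (Fin.last n))]
    simp only [if_pos rfl, mul_one]
    have : ∀ k : Fin n, (if k.castSucc = Fin.last n then (1:ℂ) else r k.castSucc - r (Fin.last n))
        = r k.castSucc - r (Fin.last n) := fun k => if_neg (Fin.castSucc_lt_last k).ne
    rw [Finset.prod_congr rfl (fun k _ => this k)]
    simp [mul_comm]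

lemma pairprod_cast {m n : ℕ} (h : m = n) (f : Fin n → Fin n → ℂ) :
    ∏ j : Fin m, ∏ k ∈ Ioi j, f (Fin.cast h j) (Fin.cast h k)
      = ∏ j : Fin n, ∏ k ∈ Ioi j, f j k := by
  subst h
  rfl

/-- `V̂(u_1,…,u_K) = ∏_{j<k}(u_k² − u_j²)`. -/
noncomputable def Vhat {K : ℕ} (u : Fin K → ℂ) : ℂ :=
  ∏ j, ∏ k ∈ Finset.Ioi j, (u k ^ 2 - u j ^ 2)

theorem stmt19 (M S : ℕ) (hMS : 1 ≤ M + S) (η : ℂ)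
    (x : Fin M → ℂ) (w : Fin S → ℂ)
    (Ct : Matrix (Fin (2 * M + S)) (Fin (2 * M + S)) ℂ)
    (hC1 : ∀ (k : Fin M) (lam : ℂ),
      (∏ l, (lam ^ 2 - (x l + η / 2) ^ 2)) *
          ∏ l ∈ Finset.univ.erase k, (lam ^ 2 - (x l - η / 2) ^ 2)
        = ∑ j, Ct j ⟨(k : ℕ), by have := k.isLt; omega⟩ * lam ^ (2 * (j : ℕ)))
    (hC2 : ∀ (k : Fin M) (lam : ℂ),
      (∏ l ∈ Finset.univ.erase k, (lam ^ 2 - (x l + η / 2) ^ 2)) *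
          ∏ l, (lam ^ 2 - (x l - η / 2) ^ 2)
        = ∑ j, Ct j ⟨M + (k : ℕ), by have := k.isLt; omega⟩ * lam ^ (2 * (j : ℕ)))
    (hC3 : ∀ (k : Fin S) (lam : ℂ),
      (∏ l, (lam ^ 2 - (x l + η / 2) ^ 2)) *
          (∏ l, (lam ^ 2 - (x l - η / 2) ^ 2)) *
          ∏ l ∈ Finset.univ.erase k, (lam ^ 2 - w l ^ 2)
        = ∑ j, Ct j ⟨2 * M + (k : ℕ), by have := k.isLt; omega⟩ * lam ^ (2 * (j : ℕ))) :
    Ct.det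
      = (∏ a, ∏ b ∈ Finset.Ioi a, (w a ^ 2 - w b ^ 2)) *
        Vhat (Fin.append (fun i : Fin M => x (Fin.rev i) + η / 2)
                         (fun i : Fin M => x (Fin.rev i) - η / 2)) := by
  classical
  set a : Fin M → ℂ := fun l => (x l + η/2)^2 with ha
  set b : Fin M → ℂ := fun l => (x l - η/2)^2 with hb
  set c : Fin S → ℂ := fun l => (w l)^2 with hc
  set ρ : Fin (2*M) → ℂ :=
    fun i => if h : (i:ℕ) < M then b ⟨(i:ℕ), h⟩
      else a ⟨(i:ℕ) - M, by have := i.isLt; omega⟩ with hρ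
  set Pp : ℂ[X] := ∏ l, (X - C (a l)) with hPp
  set Pm : ℂ[X] := ∏ l, (X - C (b l)) with hPm
  set Wk : Fin S → ℂ[X] := fun k => ∏ l ∈ univ.erase k, (X - C (c l)) with hWk
  -- step 1 : entries of Ct from the evaluation hypotheses
  have key : ∀ (col : Fin (2*M+S)) (P : ℂ[X]),
      (∀ lam : ℂ, P.eval (lam^2) = ∑ j, Ct j col * lam ^ (2*(j:ℕ))) →
      ∀ j : Fin (2*M+S), Ct j col = P.coeff (j:ℕ) := by
    intro col P hEval j
    refine coeff_of_eval P (fun j => Ct j col) ?_ j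
    intro t
    obtain ⟨lam, rfl⟩ := IsAlgClosed.exists_pow_nat_eq t (n := 2) (by norm_num)
    rw [hEval lam]
    exact Finset.sum_congr rfl fun j _ => by rw [pow_mul]
  have hcol1 : ∀ (k : Fin M) (j : Fin (2*M+S)),
      Ct j ⟨(k:ℕ), by have := k.isLt; omega⟩
        = (Pp * ∏ l ∈ univ.erase k, (X - C (b l))).coeff (j:ℕ) := by
    intro k j
    refine key _ _ ?_ j
    intro lam
    simp only [eval_mul, eval_prod, eval_sub, eval_X, eval_C, hPp, ha, hb]
    exact hC1 k lam
  have hcol2 : ∀ (k : Fin M) (j : Fin (2*M+S)),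
      Ct j ⟨M + (k:ℕ), by have := k.isLt; omega⟩
        = ((∏ l ∈ univ.erase k, (X - C (a l))) * Pm).coeff (j:ℕ) := by
    intro k j
    refine key _ _ ?_ j
    intro lam
    simp only [eval_mul, eval_prod, eval_sub, eval_X, eval_C, hPm, ha, hb]
    exact hC2 k lam
  have hcol3 : ∀ (k : Fin S) (j : Fin (2*M+S)),
      Ct j ⟨2*M + (k:ℕ), by have := k.isLt; omega⟩
        = (Pp * Pm * Wk k).coeff (j:ℕ) := by
    intro k j
    refine key _ _ ?_ j
    intro lam
    simp only [eval_mul, eval_prod, eval_sub, eval_X, eval_C, hPp, hPm, hWk, ha, hb, hc]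
    exact hC3 k lam
  -- step 2 : polynomial identities for the left block
  have hMM : M + M = 2*M := (two_mul M).symm
  have hsplit : ∏ i : Fin (2*M), (X - C (ρ i)) = Pm * Pp := by
    rw [← Fin.prod_congr' (fun i : Fin (2*M) => (X - C (ρ i))) hMM]
    rw [Fin.prod_univ_add (f := fun i : Fin (M+M) => (X - C (ρ (Fin.cast hMM i))))]
    congr 1
    · refine Finset.prod_congr rfl fun i _ => ?_
      have h1 : ((Fin.cast hMM (Fin.castAdd M i)) : ℕ) = (i:ℕ) := rfl
      have h2 : ((Fin.cast hMM (Fin.castAdd M i)) : ℕ) < M := by rw [h1]; exact i.isLt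
      simp only [hρ, dif_pos h2]
      congr 1
    · refine Finset.prod_congr rfl fun i _ => ?_
      have h2 : ¬ ((Fin.cast hMM (Fin.natAdd M i)) : ℕ) < M := by
        show ¬ M + (i:ℕ) < M; omega
      have harg : (⟨((Fin.cast hMM (Fin.natAdd M i)) : ℕ) - M,
          by have := (Fin.cast hMM (Fin.natAdd M i)).isLt; omega⟩ : Fin M) = i :=
        Fin.ext (show M + (i:ℕ) - M = (i:ℕ) by omega)
      simp only [hρ, dif_neg h2, harg]
  have hpoly1 : ∀ (k0 : Fin (2*M)) (h : (k0:ℕ) < M),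
      Pp * ∏ l ∈ univ.erase (⟨(k0:ℕ), h⟩ : Fin M), (X - C (b l))
        = ∏ l ∈ univ.erase k0, (X - C (ρ l)) := by
    intro k0 h
    apply mul_left_cancel₀ (Polynomial.X_sub_C_ne_zero (ρ k0))
    rw [Finset.mul_prod_erase _ (fun l => X - C (ρ l)) (Finset.mem_univ k0), hsplit]
    have hρk : ρ k0 = b ⟨(k0:ℕ), h⟩ := dif_pos h
    rw [hρk, mul_left_comm,
      Finset.mul_prod_erase _ (fun l => X - C (b l)) (Finset.mem_univ (⟨(k0:ℕ), h⟩ : Fin M))]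
    rw [mul_comm]
  have hpoly2 : ∀ (k0 : Fin (2*M)) (h : ¬ (k0:ℕ) < M),
      (∏ l ∈ univ.erase (⟨(k0:ℕ) - M, by have := k0.isLt; omega⟩ : Fin M), (X - C (a l))) * Pm
        = ∏ l ∈ univ.erase k0, (X - C (ρ l)) := by
    intro k0 h
    apply mul_left_cancel₀ (Polynomial.X_sub_C_ne_zero (ρ k0))
    rw [Finset.mul_prod_erase _ (fun l => X - C (ρ l)) (Finset.mem_univ k0), hsplit]
    have hρk : ρ k0 = a ⟨(k0:ℕ) - M, by have := k0.isLt; omega⟩ := dif_neg h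
    rw [hρk, ← mul_assoc,
      Finset.mul_prod_erase _ (fun l => X - C (a l))
        (Finset.mem_univ (⟨(k0:ℕ) - M, by have := k0.isLt; omega⟩ : Fin M))]
    exact mul_comm _ _
  -- step 3 : block decomposition
  set e : Fin (2*M) ⊕ Fin S ≃ Fin (2*M+S) := finSumFinEquiv with he
  set A : Matrix (Fin (2*M)) (Fin (2*M)) ℂ :=
    Matrix.of fun j k => (∏ l ∈ univ.erase k, (X - C (ρ l))).coeff (j:ℕ) with hA
  set B : Matrix (Fin (2*M)) (Fin S) ℂ :=
    Matrix.of fun j k => Ct (e (Sum.inl j)) (e (Sum.inr k)) with hB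
  set D : Matrix (Fin S) (Fin S) ℂ :=
    Matrix.of fun j k => ((Pp * Pm) * Wk k).coeff (2*M + (j:ℕ)) with hD
  have hcolA : ∀ (j : Fin (2*M+S)) (k0 : Fin (2*M)),
      Ct j (e (Sum.inl k0)) = (∏ l ∈ univ.erase k0, (X - C (ρ l))).coeff (j:ℕ) := by
    intro j k0
    by_cases h : (k0:ℕ) < M
    · rw [show e (Sum.inl k0)
          = (⟨((⟨(k0:ℕ), h⟩ : Fin M) : ℕ), by have := k0.isLt; omega⟩ : Fin (2*M+S)) from
        Fin.ext (by simp [he]), hcol1 ⟨(k0:ℕ), h⟩ j, hpoly1 k0 h]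
    · rw [show e (Sum.inl k0)
          = (⟨M + ((⟨(k0:ℕ) - M, by have := k0.isLt; omega⟩ : Fin M) : ℕ),
              by have := k0.isLt; omega⟩ : Fin (2*M+S)) from
        Fin.ext (by simp [he]; omega), hcol2 ⟨(k0:ℕ) - M, by have := k0.isLt; omega⟩ j,
        hpoly2 k0 h]
  have hcolD : ∀ (j : Fin (2*M+S)) (k : Fin S),
      Ct j (e (Sum.inr k)) = ((Pp * Pm) * Wk k).coeff (j:ℕ) := by
    intro j k
    rw [show e (Sum.inr k) = (⟨2*M + (k:ℕ), by have := k.isLt; omega⟩ : Fin (2*M+S)) from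
      Fin.ext (by simp [he])]
    exact hcol3 k j
  have hzero : ∀ (j : Fin S) (k0 : Fin (2*M)),
      Ct (e (Sum.inr j)) (e (Sum.inl k0)) = 0 := by
    intro j k0
    rw [hcolA _ k0]
    apply Polynomial.coeff_eq_zero_of_natDegree_lt
    have hdeg : (∏ l ∈ univ.erase k0, (X - C (ρ l))).natDegree ≤ 2*M - 1 := by
      refine le_trans (Polynomial.natDegree_prod_le _ _) ?_
      calc ∑ l ∈ univ.erase k0, (X - C (ρ l)).natDegree
          ≤ ∑ l ∈ univ.erase k0, 1 := by
            apply Finset.sum_le_sum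
            intro l _
            exact le_of_eq (natDegree_X_sub_C _)
        _ = 2*M - 1 := by simp [Finset.card_erase_of_mem]
    have hval : ((e (Sum.inr j)) : ℕ) = 2*M + (j:ℕ) := by simp [he]
    have hk0 := k0.isLt
    omega
  have hblocks : Ct.submatrix e e = Matrix.fromBlocks A B 0 D := by
    ext i k
    cases i with
    | inl i =>
      cases k with
      | inl k => simpa [hA, he] using hcolA (e (Sum.inl i)) k
      | inr k => rfl
    | inr i =>
      cases k with
      | inl k => simpa using hzero i k
      | inr k =>
        show Ct (e (Sum.inr i)) (e (Sum.inr k)) = D i k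
        rw [hcolD (e (Sum.inr i)) k]
        have hval : ((e (Sum.inr i)) : ℕ) = 2*M + (i:ℕ) := by simp [he]
        simp [hD, hval]
  have hdet1 : Ct.det = A.det * D.det := by
    rw [← Matrix.det_submatrix_equiv_self e Ct, hblocks, Matrix.det_fromBlocks_zero₂₁]
  have hdetA : A.det = ∏ j, ∏ k ∈ Ioi j, (ρ j - ρ k) := lagDet (2*M) ρ
  have hmonPp : Pp.Monic := monic_prod_of_monic _ _ fun l _ => monic_X_sub_C _
  have hmonPm : Pm.Monic := monic_prod_of_monic _ _ fun l _ => monic_X_sub_C _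
  have hdegPp : Pp.natDegree = M := by
    rw [hPp, natDegree_prod_of_monic _ _ (fun l _ => monic_X_sub_C _)]
    simp [natDegree_X_sub_C]
  have hdegPm : Pm.natDegree = M := by
    rw [hPm, natDegree_prod_of_monic _ _ (fun l _ => monic_X_sub_C _)]
    simp [natDegree_X_sub_C]
  have hQdeg : (Pp * Pm).natDegree = 2*M := by
    rw [hmonPp.natDegree_mul hmonPm, hdegPp, hdegPm]
    omega
  have hdetD : D.det = ∏ j, ∏ k ∈ Ioi j, (c j - c k) := by
    have hwdeg : ∀ k : Fin S, (Wk k).natDegree < S := by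
      intro k
      have h1 : (Wk k).natDegree ≤ S - 1 := by
        refine le_trans (Polynomial.natDegree_prod_le _ _) ?_
        calc ∑ l ∈ univ.erase k, (X - C (c l)).natDegree
            ≤ ∑ l ∈ univ.erase k, 1 := by
              apply Finset.sum_le_sum
              intro l _
              exact le_of_eq (natDegree_X_sub_C _)
          _ = S - 1 := by simp [Finset.card_erase_of_mem]
      have := k.isLt
      omega
    have h2 := detShift (n := S) (d := 2*M) (Pp * Pm) (hmonPp.mul hmonPm) hQdeg Wk hwdeg
    rw [hD]
    rw [h2]
    exact lagDet S c
  -- step 4 : the Vhat identity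
  have hu : ∀ i : Fin (M+M),
      (Fin.append (fun i : Fin M => x (Fin.rev i) + η / 2)
        (fun i : Fin M => x (Fin.rev i) - η / 2) i)^2
        = ρ (Fin.cast hMM (Fin.rev i)) := by
    intro i
    by_cases hi : (i:ℕ) < M
    · rw [show i = Fin.castAdd M ⟨(i:ℕ), hi⟩ from Fin.ext rfl, Fin.append_left]
      have h2 : ¬ ((Fin.cast hMM (Fin.rev (Fin.castAdd M ⟨(i:ℕ), hi⟩))) : ℕ) < M := by
        simp only [Fin.coe_cast, Fin.val_rev, Fin.coe_castAdd]
        omega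
      show a (Fin.rev ⟨(i:ℕ), hi⟩) = _
      rw [hρ]
      simp only []
      rw [dif_neg h2]
      congr 1
      apply Fin.ext
      simp only [Fin.val_rev, Fin.coe_cast, Fin.coe_castAdd]
      omega
    · rw [show i = Fin.natAdd M ⟨(i:ℕ) - M, by have := i.isLt; omega⟩ from
        Fin.ext (by simp; omega), Fin.append_right]
      have h2 : ((Fin.cast hMM (Fin.rev (Fin.natAdd M ⟨(i:ℕ) - M, by have := i.isLt; omega⟩))) : ℕ) < M := by
        simp only [Fin.coe_cast, Fin.val_rev, Fin.coe_natAdd]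
        omega
      show b (Fin.rev ⟨(i:ℕ) - M, _⟩) = _
      rw [hρ]
      simp only []
      rw [dif_pos h2]
      congr 1
      apply Fin.ext
      simp only [Fin.val_rev, Fin.coe_cast, Fin.coe_natAdd]
      omega
  have hVhat : Vhat (Fin.append (fun i : Fin M => x (Fin.rev i) + η / 2)
      (fun i : Fin M => x (Fin.rev i) - η / 2)) = ∏ j, ∏ k ∈ Ioi j, (ρ j - ρ k) := by
    unfold Vhat
    calc ∏ j : Fin (M+M), ∏ k ∈ Ioi j,
          ((Fin.append (fun i : Fin M => x (Fin.rev i) + η / 2)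
            (fun i : Fin M => x (Fin.rev i) - η / 2) k)^2 -
           (Fin.append (fun i : Fin M => x (Fin.rev i) + η / 2)
            (fun i : Fin M => x (Fin.rev i) - η / 2) j)^2)
        = ∏ j : Fin (M+M), ∏ k ∈ Ioi j,
            (ρ (Fin.cast hMM (Fin.rev k)) - ρ (Fin.cast hMM (Fin.rev j))) :=
          Finset.prod_congr rfl fun j _ => Finset.prod_congr rfl fun k _ => by
            rw [hu j, hu k]
      _ = ∏ j : Fin (M+M), ∏ k ∈ Ioi j, (ρ (Fin.cast hMM j) - ρ (Fin.cast hMM k)) :=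
          pairprod_rev (fun j k => ρ (Fin.cast hMM k) - ρ (Fin.cast hMM j))
      _ = ∏ j, ∏ k ∈ Ioi j, (ρ j - ρ k) := pairprod_cast hMM (fun j k => ρ j - ρ k)
  rw [hdet1, hdetA, hdetD, ← hVhat, mul_comm]
end
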